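/- Let G be a compact quantum group with Haar state h, and for each irreducible unitary representation α with matrix coefficients U^α_{ij} (1 ≤ i,j ≤ dim α) let ρ_α be the unique positive invertible intertwiner between U^α and its double contragredient normalized so that Tr(ρ_α) = Tr(ρ_α⁻¹). Then the Schur orthogonality relations hold: h((U^β_{ik})* U^α_{jl}) = δ_{α,β} δ_{k,l} (ρ_α⁻¹)_{j,i} / Tr(ρ_α). -/

import Mathlib

open scoped TensorProduct ComplexOrder

namespace SchurAux
set_option linter.unusedSectionVars false

variable {A : Type*} [Ring A] [Algebra ℂ A] [StarRing A] [StarModule ℂ A]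

theorem map_alg_one' {n : ℕ} :
    (1 : Matrix (Fin n) (Fin n) ℂ).map (algebraMap ℂ A) = 1 :=
  Matrix.map_one _ (map_zero _) (map_one _)

theorem map_alg_mul' {n m o : ℕ}
    (M : Matrix (Fin n) (Fin m) ℂ) (N : Matrix (Fin m) (Fin o) ℂ) :
    (M * N).map (algebraMap ℂ A) = M.map (algebraMap ℂ A) * N.map (algebraMap ℂ A) :=
  Matrix.map_mul (f := algebraMap ℂ A)

theorem map_alg_one {B : Type*} [Ring B] [Algebra ℂ B] (f : A →ₐ[ℂ] B) {n : ℕ} :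
    (1 : Matrix (Fin n) (Fin n) A).map f = 1 :=
  Matrix.map_one _ (map_zero _) (map_one _)

theorem map_alg_mul {B : Type*} [Ring B] [Algebra ℂ B] (f : A →ₐ[ℂ] B) {n m o : ℕ}
    (M : Matrix (Fin n) (Fin m) A) (N : Matrix (Fin m) (Fin o) A) :
    (M * N).map f = M.map f * N.map f :=
  Matrix.map_mul (f := f.toRingHom)

theorem scalar_left_abs {n : ℕ} (M : Matrix (Fin n) (Fin n) ℂ)
    (V X : Matrix (Fin n) (Fin n) A)
    (hMV : M.map (algebraMap ℂ A) * V = V) (hVX : V * X = 1) :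
    M.map (algebraMap ℂ A) = 1 := by
  calc M.map (algebraMap ℂ A) = M.map (algebraMap ℂ A) * (V * X) := by rw [hVX, mul_one]
    _ = (M.map (algebraMap ℂ A) * V) * X := by rw [mul_assoc]
    _ = V * X := by rw [hMV]
    _ = 1 := hVX

theorem scalar_inj (injA : Function.Injective (algebraMap ℂ A)) {n m : ℕ}
    {M N : Matrix (Fin n) (Fin m) ℂ}
    (hMN : M.map (algebraMap ℂ A) = N.map (algebraMap ℂ A)) : M = N := by
  ext i j
  exact injA (congrFun (congrFun hMN i) j)

theorem transpose_central_left {n m o : ℕ} (C : Matrix (Fin n) (Fin m) ℂ)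
    (M : Matrix (Fin m) (Fin o) A) :
    (C.map (algebraMap ℂ A) * M).transpose =
      M.transpose * C.transpose.map (algebraMap ℂ A) := by
  ext i j
  simp only [Matrix.transpose_apply, Matrix.mul_apply, Matrix.map_apply]
  exact Finset.sum_congr rfl fun k _ => (Algebra.commutes _ _)

theorem transpose_central_right {n m o : ℕ} (M : Matrix (Fin n) (Fin m) A)
    (C : Matrix (Fin m) (Fin o) ℂ) :
    (M * C.map (algebraMap ℂ A)).transpose =
      C.transpose.map (algebraMap ℂ A) * M.transpose := by
  ext i j
  simp only [Matrix.transpose_apply, Matrix.mul_apply, Matrix.map_apply]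
  exact Finset.sum_congr rfl fun k _ => (Algebra.commutes _ _).symm

theorem conjTranspose_map_alg {n m : ℕ} (C : Matrix (Fin n) (Fin m) ℂ) :
    (C.map (algebraMap ℂ A)).conjTranspose = C.conjTranspose.map (algebraMap ℂ A) := by
  ext i j
  simp only [Matrix.conjTranspose_apply, Matrix.map_apply]
  exact (algebraMap_star_comm (C j i)).symm


/-- The comultiplication of starred matrix coefficients. -/
theorem delta_star (Δ : A →ₐ[ℂ] A ⊗[ℂ] A) {n : ℕ}
    (V : Matrix (Fin n) (Fin n) A)
    (hV1 : V * V.conjTranspose = 1) (hV2 : V.conjTranspose * V = 1)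
    (hVc : ∀ i j, Δ (V i j) = ∑ k, V i k ⊗ₜ[ℂ] V k j) :
    ∀ i j, Δ (star (V i j)) = ∑ k, star (V i k) ⊗ₜ[ℂ] star (V k j) := by
  classical
  set ιL : A →ₐ[ℂ] A ⊗[ℂ] A := Algebra.TensorProduct.includeLeft with hιL
  set ιR : A →ₐ[ℂ] A ⊗[ℂ] A := Algebra.TensorProduct.includeRight with hιR
  set P : Matrix (Fin n) (Fin n) (A ⊗[ℂ] A) := V.map ιL with hP
  set Q : Matrix (Fin n) (Fin n) (A ⊗[ℂ] A) := V.map ιR with hQ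
  set P' : Matrix (Fin n) (Fin n) (A ⊗[ℂ] A) := V.conjTranspose.map ιL with hP'
  set Q' : Matrix (Fin n) (Fin n) (A ⊗[ℂ] A) := V.conjTranspose.map ιR with hQ'
  set W : Matrix (Fin n) (Fin n) (A ⊗[ℂ] A) := V.map Δ with hW
  set W' : Matrix (Fin n) (Fin n) (A ⊗[ℂ] A) := V.conjTranspose.map Δ with hW'
  have hPP' : P * P' = 1 := by
    rw [hP, hP', ← map_alg_mul, hV1, map_alg_one]
  have hQQ' : Q * Q' = 1 := by
    rw [hQ, hQ', ← map_alg_mul, hV1, map_alg_one]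
  have hW'W : W' * W = 1 := by
    rw [hW, hW', ← map_alg_mul, hV2, map_alg_one]
  have hWQP : W = P * Q := by
    ext i j
    simp only [hW, Matrix.map_apply, hVc, Matrix.mul_apply, hP, hQ, hιL, hιR,
      Algebra.TensorProduct.includeLeft_apply, Algebra.TensorProduct.includeRight_apply,
      Algebra.TensorProduct.tmul_mul_tmul, mul_one, one_mul]
  have key : W' = Q' * P' := by
    have h1 : W * (Q' * P') = 1 := by
      rw [hWQP, mul_assoc, ← mul_assoc Q Q' P', hQQ', one_mul, hPP']
    calc W' = W' * (W * (Q' * P')) := by rw [h1, mul_one]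
    _ = (W' * W) * (Q' * P') := by rw [mul_assoc]
    _ = Q' * P' := by rw [hW'W, one_mul]
  intro i j
  have := congrFun (congrFun key j) i
  simp only [hW', Matrix.map_apply, Matrix.conjTranspose_apply, Matrix.mul_apply, hQ', hP',
    hιL, hιR, Algebra.TensorProduct.includeLeft_apply, Algebra.TensorProduct.includeRight_apply,
    Algebra.TensorProduct.tmul_mul_tmul, mul_one, one_mul] at this
  exact this


/-- averaging a product of a starred coefficient of `V` and a coefficient of `W`
gives an intertwiner. -/
theorem key_intertwine (Δ : A →ₐ[ℂ] A ⊗[ℂ] A) (h : A →ₗ[ℂ] ℂ)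
    (hinv_left : ∀ a : A,
      (TensorProduct.lid ℂ A) ((LinearMap.rTensor A h) (Δ a)) = h a • (1 : A))
    {n m : ℕ}
    (V : Matrix (Fin n) (Fin n) A) (W : Matrix (Fin m) (Fin m) A)
    (hV1 : V * V.conjTranspose = 1) (hV2 : V.conjTranspose * V = 1)
    (hVc : ∀ i j, Δ (V i j) = ∑ k, V i k ⊗ₜ[ℂ] V k j)
    (hWc : ∀ i j, Δ (W i j) = ∑ k, W i k ⊗ₜ[ℂ] W k j)
    (i : Fin n) (j : Fin m) :
    V * (Matrix.of fun k l => h (star (V i k) * W j l)).map (algebraMap ℂ A) =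
      (Matrix.of fun k l => h (star (V i k) * W j l)).map (algebraMap ℂ A) * W := by
  classical
  set F : Matrix (Fin n) (Fin m) ℂ := Matrix.of fun k l => h (star (V i k) * W j l) with hF
  have hstar := delta_star Δ V hV1 hV2 hVc
  -- the invariance identity, entrywise
  have main : V.conjTranspose * F.map (algebraMap ℂ A) * W = F.map (algebraMap ℂ A) := by
    ext k l
    have hΔ : Δ (star (V i k) * W j l) =
        ∑ p, ∑ q, (star (V i p) * W j q) ⊗ₜ[ℂ] (star (V p k) * W q l) := by
      rw [map_mul, hstar, hWc, Finset.sum_mul_sum]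
      simp only [Algebra.TensorProduct.tmul_mul_tmul]
    have inv := hinv_left (star (V i k) * W j l)
    rw [hΔ] at inv
    simp only [map_sum, LinearMap.rTensor_tmul, TensorProduct.lid_tmul] at inv
    -- inv : ∑ p, ∑ q, h (star (V i p) * W j q) • (star (V p k) * W q l) = h (...) • 1
    have lhs_eq : (V.conjTranspose * F.map (algebraMap ℂ A) * W) k l =
        ∑ p, ∑ q, h (star (V i p) * W j q) • (star (V p k) * W q l) := by
      simp only [Matrix.mul_apply, Matrix.map_apply, Matrix.conjTranspose_apply, hF,
        Matrix.of_apply, Finset.sum_mul]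
      rw [Finset.sum_comm]
      refine Finset.sum_congr rfl fun p _ => Finset.sum_congr rfl fun q _ => ?_
      rw [Algebra.smul_def, ← mul_assoc, ← Algebra.commutes, mul_assoc]
    rw [lhs_eq, inv]
    simp [hF, Algebra.algebraMap_eq_smul_one]
  calc V * F.map (algebraMap ℂ A)
      = V * (V.conjTranspose * F.map (algebraMap ℂ A) * W) := by rw [main]
    _ = F.map (algebraMap ℂ A) * W := by
        rw [← Matrix.mul_assoc, ← Matrix.mul_assoc, hV1, Matrix.one_mul]


theorem conj_relation (Δ : A →ₐ[ℂ] A ⊗[ℂ] A) (h : A →ₗ[ℂ] ℂ)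
    (hinv_right : ∀ a : A,
      (TensorProduct.rid ℂ A) ((LinearMap.lTensor A h) (Δ a)) = h a • (1 : A))
    {n : ℕ} (V : Matrix (Fin n) (Fin n) A)
    (hVc : ∀ i j, Δ (V i j) = ∑ k, V i k ⊗ₜ[ℂ] V k j)
    (hstar : ∀ i j, Δ (star (V i j)) = ∑ k, star (V i k) ⊗ₜ[ℂ] star (V k j))
    (C : Matrix (Fin n) (Fin n) ℂ)
    (hC : ∀ i k j l, h (star (V i k) * V j l) = if k = l then C i j else 0)
    (k : Fin n) :
    V.map star * C.map (algebraMap ℂ A) * V.transpose = C.map (algebraMap ℂ A) := by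
  classical
  ext i j
  have hΔ : Δ (star (V i k) * V j k) =
      ∑ p, ∑ q, (star (V i p) * V j q) ⊗ₜ[ℂ] (star (V p k) * V q k) := by
    rw [map_mul, hstar, hVc, Finset.sum_mul_sum]
    simp only [Algebra.TensorProduct.tmul_mul_tmul]
  have inv := hinv_right (star (V i k) * V j k)
  rw [hΔ] at inv
  simp only [map_sum, LinearMap.lTensor_tmul, TensorProduct.rid_tmul] at inv
  -- inv : ∑ p, ∑ q, h (star (V p k) * V q k) • (star (V i p) * V j q) = h (...) • 1
  have lhs_eq : (V.map star * C.map (algebraMap ℂ A) * V.transpose) i j =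
      ∑ q, ∑ p, h (star (V p k) * V q k) • (star (V i p) * V j q) := by
    simp only [Matrix.mul_apply, Matrix.map_apply, Matrix.transpose_apply, Finset.sum_mul]
    refine Finset.sum_congr rfl fun q _ => Finset.sum_congr rfl fun p _ => ?_
    rw [hC p k q k, if_pos rfl, Algebra.smul_def, ← mul_assoc, ← Algebra.commutes, mul_assoc]
  rw [Finset.sum_comm] at inv
  rw [lhs_eq, inv, hC i k j k, if_pos rfl, Matrix.map_apply, Algebra.algebraMap_eq_smul_one]


/-- the counit of matrix coefficients of an invertible corepresentation. -/
theorem eps_matrix (Δ : A →ₐ[ℂ] A ⊗[ℂ] A) (ε : A →ₐ[ℂ] ℂ)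
    (counit_left : ∀ a : A,
      (TensorProduct.lid ℂ A) ((LinearMap.rTensor A ε.toLinearMap) (Δ a)) = a)
    {n : ℕ} (V : Matrix (Fin n) (Fin n) A)
    (hVc : ∀ i j, Δ (V i j) = ∑ k, V i k ⊗ₜ[ℂ] V k j) :
    (Matrix.of fun i j => ε (V i j)).map (algebraMap ℂ A) * V = V := by
  ext i j
  have cu := counit_left (V i j)
  rw [hVc] at cu
  simp only [map_sum, LinearMap.rTensor_tmul, TensorProduct.lid_tmul, AlgHom.toLinearMap_apply]
    at cu
  rw [Matrix.mul_apply]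
  simp only [Matrix.map_apply, Matrix.of_apply, ← Algebra.smul_def]
  exact cu

/-- the antipode applied to matrix coefficients: `S(v_{ij}) = (inverse matrix)_{ij}`. -/
theorem antipode_matrix_left (Δ : A →ₐ[ℂ] A ⊗[ℂ] A) (ε : A →ₐ[ℂ] ℂ) (S : A →ₗ[ℂ] A)
    (antipode_left : ∀ a : A,
      (LinearMap.mul' ℂ A) ((LinearMap.rTensor A S) (Δ a)) = ε a • (1 : A))
    {n : ℕ} (V : Matrix (Fin n) (Fin n) A)
    (hVc : ∀ i j, Δ (V i j) = ∑ k, V i k ⊗ₜ[ℂ] V k j)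
    (hε : ∀ i j, ε (V i j) = if i = j then 1 else 0) :
    V.map S * V = 1 := by
  ext i j
  have ap := antipode_left (V i j)
  rw [hVc] at ap
  simp only [map_sum, LinearMap.rTensor_tmul, LinearMap.mul'_apply] at ap
  rw [Matrix.mul_apply]
  simp only [Matrix.map_apply]
  rw [ap, hε i j, Matrix.one_apply]
  by_cases hij : i = j <;> simp [hij]

theorem antipode_matrix_right (Δ : A →ₐ[ℂ] A ⊗[ℂ] A) (ε : A →ₐ[ℂ] ℂ) (S : A →ₗ[ℂ] A)
    (antipode_right : ∀ a : A,
      (LinearMap.mul' ℂ A) ((LinearMap.lTensor A S) (Δ a)) = ε a • (1 : A))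
    {n : ℕ} (V : Matrix (Fin n) (Fin n) A)
    (hVc : ∀ i j, Δ (V i j) = ∑ k, V i k ⊗ₜ[ℂ] V k j)
    (hε : ∀ i j, ε (V i j) = if i = j then 1 else 0) :
    V * V.map S = 1 := by
  ext i j
  have ap := antipode_right (V i j)
  rw [hVc] at ap
  simp only [map_sum, LinearMap.lTensor_tmul, LinearMap.mul'_apply] at ap
  rw [Matrix.mul_apply]
  simp only [Matrix.map_apply]
  rw [ap, hε i j, Matrix.one_apply]
  by_cases hij : i = j <;> simp [hij]


theorem ubar_inverse (Δ : A →ₐ[ℂ] A ⊗[ℂ] A) (ε : A →ₐ[ℂ] ℂ) (S : A →ₗ[ℂ] A)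
    (counit_left : ∀ a : A,
      (TensorProduct.lid ℂ A) ((LinearMap.rTensor A ε.toLinearMap) (Δ a)) = a)
    (antipode_left : ∀ a : A,
      (LinearMap.mul' ℂ A) ((LinearMap.rTensor A S) (Δ a)) = ε a • (1 : A))
    (antipode_right : ∀ a : A,
      (LinearMap.mul' ℂ A) ((LinearMap.lTensor A S) (Δ a)) = ε a • (1 : A))
    (injA : Function.Injective (algebraMap ℂ A))
    {n : ℕ} (V : Matrix (Fin n) (Fin n) A)
    (hV1 : V * V.conjTranspose = 1) (hV2 : V.conjTranspose * V = 1)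
    (hVc : ∀ i j, Δ (V i j) = ∑ k, V i k ⊗ₜ[ℂ] V k j)
    (ρ ρ' : Matrix (Fin n) (Fin n) ℂ) (hρρ' : ρ * ρ' = 1)
    (hint : (V.map fun a => S (S a)) * ρ.map (algebraMap ℂ A) =
      ρ.map (algebraMap ℂ A) * V) :
    V.map star * (ρ.map (algebraMap ℂ A) * V * ρ'.map (algebraMap ℂ A)).transpose = 1 ∧
    (ρ.map (algebraMap ℂ A) * V * ρ'.map (algebraMap ℂ A)).transpose * V.map star = 1 := by
  classical
  have hεV : ∀ i j, ε (V i j) = if i = j then 1 else 0 := by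
    have e1 := eps_matrix Δ ε counit_left V hVc
    have e2 := scalar_left_abs _ V V.conjTranspose e1 hV1
    have e3 : (Matrix.of fun i j => ε (V i j)) = 1 :=
      scalar_inj injA (by rw [e2, map_alg_one'])
    intro i j
    have := congrFun (congrFun e3 i) j
    rwa [Matrix.one_apply] at this
  have a1 := antipode_matrix_left Δ ε S antipode_left V hVc hεV
  have hVS : V.map ⇑S = V.conjTranspose := by
    calc V.map ⇑S = V.map ⇑S * (V * V.conjTranspose) := by rw [hV1, mul_one]
      _ = (V.map ⇑S * V) * V.conjTranspose := by rw [mul_assoc]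
      _ = V.conjTranspose := by rw [a1, one_mul]
  have hM : V.conjTranspose.map ⇑S =
      ρ.map (algebraMap ℂ A) * V * ρ'.map (algebraMap ℂ A) := by
    have hmm : (V.map fun a => S (S a)) = V.conjTranspose.map ⇑S := by
      rw [← hVS, Matrix.map_map]
      rfl
    rw [hmm] at hint
    calc V.conjTranspose.map ⇑S
        = V.conjTranspose.map ⇑S * ((ρ * ρ').map (algebraMap ℂ A)) := by
          rw [hρρ', map_alg_one', mul_one]
      _ = V.conjTranspose.map ⇑S * ρ.map (algebraMap ℂ A) * ρ'.map (algebraMap ℂ A) := by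
          rw [map_alg_mul', mul_assoc]
      _ = ρ.map (algebraMap ℂ A) * V * ρ'.map (algebraMap ℂ A) := by rw [hint]
  set Ubar : Matrix (Fin n) (Fin n) A := V.map star with hUbar
  set M : Matrix (Fin n) (Fin n) A :=
    ρ.map (algebraMap ℂ A) * V * ρ'.map (algebraMap ℂ A) with hMdef
  have hUbarS : Ubar.map ⇑S = M.transpose := by
    ext i j
    have := congrFun (congrFun hM j) i
    simpa [hUbar, Matrix.map_apply, Matrix.transpose_apply, Matrix.conjTranspose_apply] using this
  have hUbarc : ∀ i j, Δ (Ubar i j) = ∑ k, Ubar i k ⊗ₜ[ℂ] Ubar k j := by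
    intro i j
    simpa [hUbar, Matrix.map_apply] using delta_star Δ V hV1 hV2 hVc i j
  have hεbar : ∀ i j, ε (Ubar i j) = if i = j then 1 else 0 := by
    have e1 := eps_matrix Δ ε counit_left Ubar hUbarc
    have e1' : (Matrix.of fun i j => star (ε (Ubar i j))).map (algebraMap ℂ A)
        * V = V := by
      ext i j
      have := congrFun (congrFun e1 i) j
      rw [Matrix.mul_apply] at this
      have := congrArg star this
      rw [star_sum] at this
      calc ((Matrix.of fun i j => star (ε (Ubar i j))).map (algebraMap ℂ A)
            * V) i j
          = ∑ k, star ((Matrix.of fun i j => ε (Ubar i j)).map (algebraMap ℂ A) i k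
              * Ubar k j) := by
            rw [Matrix.mul_apply]
            refine Finset.sum_congr rfl fun k _ => ?_
            simp only [Matrix.map_apply, Matrix.of_apply]
            have h1 : star (Ubar k j) = V k j := by simp [hUbar]
            have h2 : (algebraMap ℂ A) (star (ε (Ubar i k)))
                = star ((algebraMap ℂ A) (ε (Ubar i k))) := algebraMap_star_comm _
            rw [star_mul, h1, ← h2]
            exact Algebra.commutes _ _
        _ = star (Ubar i j) := this
        _ = V i j := by simp [hUbar]
    have e2 := scalar_left_abs _ V V.conjTranspose e1' hV1
    have e3 : (Matrix.of fun i j => star (ε (Ubar i j))) = 1 :=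
      scalar_inj injA (by rw [e2, map_alg_one'])
    intro i j
    have := congrFun (congrFun e3 i) j
    rw [Matrix.one_apply] at this
    have := congrArg star this
    simp only [Matrix.of_apply, star_star] at this
    rw [this]
    by_cases hij : i = j <;> simp [hij]
  constructor
  · have := antipode_matrix_right Δ ε S antipode_right Ubar hUbarc hεbar
    rwa [hUbarS] at this
  · have := antipode_matrix_left Δ ε S antipode_left Ubar hUbarc hεbar
    rwa [hUbarS] at this


end SchurAux

open SchurAux in
theorem schur_orthogonality_compact_quantum_group
    {A : Type*} [Ring A] [Algebra ℂ A] [StarRing A] [StarModule ℂ A]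
    (Δ : A →ₐ[ℂ] A ⊗[ℂ] A)
    (coassoc : ∀ a : A,
      (Algebra.TensorProduct.assoc ℂ ℂ ℂ A A A)
          ((Algebra.TensorProduct.map Δ (AlgHom.id ℂ A)) (Δ a)) =
        (Algebra.TensorProduct.map (AlgHom.id ℂ A) Δ) (Δ a))
    (ε : A →ₐ[ℂ] ℂ)
    (counit_left : ∀ a : A,
      (TensorProduct.lid ℂ A) ((LinearMap.rTensor A ε.toLinearMap) (Δ a)) = a)
    (counit_right : ∀ a : A,
      (TensorProduct.rid ℂ A) ((LinearMap.lTensor A ε.toLinearMap) (Δ a)) = a)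
    (S : A →ₗ[ℂ] A)
    (antipode_left : ∀ a : A,
      (LinearMap.mul' ℂ A) ((LinearMap.rTensor A S) (Δ a)) = ε a • (1 : A))
    (antipode_right : ∀ a : A,
      (LinearMap.mul' ℂ A) ((LinearMap.lTensor A S) (Δ a)) = ε a • (1 : A))
    -- the Haar state: a bi-invariant state
    (h : A →ₗ[ℂ] ℂ) (hone : h 1 = 1)
    (hpos : ∀ a : A, ∃ r : ℝ, 0 ≤ r ∧ h (star a * a) = (r : ℂ))
    (hfaithful : ∀ a : A, h (star a * a) = 0 → a = 0)
    (hinv_left : ∀ a : A,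
      (TensorProduct.lid ℂ A) ((LinearMap.rTensor A h) (Δ a)) = h a • (1 : A))
    (hinv_right : ∀ a : A,
      (TensorProduct.rid ℂ A) ((LinearMap.lTensor A h) (Δ a)) = h a • (1 : A))
    -- the irreducible unitary representations
    {I : Type*} (d : I → ℕ) (hd : ∀ α, 0 < d α)
    (U : ∀ α : I, Matrix (Fin (d α)) (Fin (d α)) A)
    (hunitary : ∀ α, U α * (U α).conjTranspose = 1 ∧ (U α).conjTranspose * U α = 1)
    (hcorep : ∀ α (i j : Fin (d α)),
      Δ (U α i j) = ∑ k : Fin (d α), U α i k ⊗ₜ[ℂ] U α k j)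
    (hirred : ∀ α (T : Matrix (Fin (d α)) (Fin (d α)) ℂ),
      T.map (algebraMap ℂ A) * U α = U α * T.map (algebraMap ℂ A) →
        ∃ c : ℂ, T = c • (1 : Matrix (Fin (d α)) (Fin (d α)) ℂ))
    (hinequiv : ∀ α β, α ≠ β → ∀ T : Matrix (Fin (d α)) (Fin (d β)) ℂ,
      U α * T.map (algebraMap ℂ A) = T.map (algebraMap ℂ A) * U β → T = 0)
    -- the normalised positive intertwiner between `U α` and its double contragredient
    (ρ : ∀ α : I, Matrix (Fin (d α)) (Fin (d α)) ℂ)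
    (hρpos : ∀ α, (ρ α).PosDef)
    (hρtrace : ∀ α, (ρ α).trace = ((ρ α)⁻¹).trace)
    (hρintertwine : ∀ α,
      ((U α).map fun a => S (S a)) * (ρ α).map (algebraMap ℂ A) =
        (ρ α).map (algebraMap ℂ A) * U α) :
    (∀ α β, α ≠ β → ∀ (i k : Fin (d β)) (j l : Fin (d α)),
        h (star (U β i k) * U α j l) = 0) ∧
    (∀ α (i k j l : Fin (d α)),
        h (star (U α i k) * U α j l) =
          (if k = l then 1 else 0) * ((ρ α)⁻¹ j i) / (ρ α).trace) := by
  classical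
  have nontriv : Nontrivial A :=
    ⟨⟨1, 0, fun h10 => one_ne_zero (α := ℂ) (by rw [← hone, h10, map_zero])⟩⟩
  have injA : Function.Injective (algebraMap ℂ A) := (algebraMap ℂ A).injective
  constructor
  · -- inequivalent representations are orthogonal
    intro α β hne i k j l
    have key := key_intertwine Δ h hinv_left (U β) (U α)
      (hunitary β).1 (hunitary β).2 (hcorep β) (hcorep α) i j
    have hz := hinequiv β α hne.symm _ key
    have := congrFun (congrFun hz k) l
    simpa using this
  · -- orthogonality within one representation
    intro α i₀ k₀ j₀ l₀
    -- the scalar intertwiners coming from averaging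
    have hFscalar : ∀ i j : Fin (d α), ∃ c : ℂ,
        (Matrix.of fun k l => h (star (U α i k) * U α j l)) =
          c • (1 : Matrix (Fin (d α)) (Fin (d α)) ℂ) := by
      intro i j
      refine hirred α _ ?_
      exact (key_intertwine Δ h hinv_left (U α) (U α)
        (hunitary α).1 (hunitary α).2 (hcorep α) (hcorep α) i j).symm
    choose c hc using hFscalar
    set C : Matrix (Fin (d α)) (Fin (d α)) ℂ := Matrix.of fun i j => c i j with hCdef
    have hC : ∀ i k j l : Fin (d α),
        h (star (U α i k) * U α j l) = if k = l then C i j else 0 := by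
      intro i k j l
      have := congrFun (congrFun (hc i j) k) l
      simp only [Matrix.of_apply, Matrix.smul_apply, Matrix.one_apply, smul_eq_mul,
        mul_ite, mul_one, mul_zero] at this
      simpa [hCdef] using this
    -- invertibility of ρ
    have hρdet : IsUnit (ρ α).det := isUnit_iff_ne_zero.mpr (hρpos α).det_pos.ne'
    have hρρ' : ρ α * (ρ α)⁻¹ = 1 := Matrix.mul_nonsing_inv _ hρdet
    have hρ'ρ : (ρ α)⁻¹ * ρ α = 1 := Matrix.nonsing_inv_mul _ hρdet
    -- the inverse of the conjugate matrix
    obtain ⟨hub1, hub2⟩ := ubar_inverse Δ ε S counit_left antipode_left antipode_right injA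
      (U α) (hunitary α).1 (hunitary α).2 (hcorep α) (ρ α) (ρ α)⁻¹ hρρ' (hρintertwine α)
    set Ubar : Matrix (Fin (d α)) (Fin (d α)) A := (U α).map star with hUbar
    set ρA : Matrix (Fin (d α)) (Fin (d α)) A := (ρ α).map (algebraMap ℂ A) with hρA
    set ρ'A : Matrix (Fin (d α)) (Fin (d α)) A := ((ρ α)⁻¹).map (algebraMap ℂ A) with hρ'A
    set M : Matrix (Fin (d α)) (Fin (d α)) A := ρA * U α * ρ'A with hMdef
    -- hub1 : Ubar * Mᵀ = 1 ; hub2 : Mᵀ * Ubar = 1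
    have hUbarH : Ubar.conjTranspose = (U α).transpose := by
      ext i j
      simp [hUbar, Matrix.conjTranspose_apply, Matrix.map_apply]
    have hUHT : (U α).conjTranspose.transpose = Ubar := by
      ext i j
      simp [hUbar, Matrix.conjTranspose_apply, Matrix.map_apply]
    have hρ'herm : ((ρ α)⁻¹).conjTranspose = (ρ α)⁻¹ := (hρpos α).1.inv
    -- N := ρᵀ_A * Ubar * ρ'ᵀ_A is a two-sided inverse of Uᵀ
    have hMTH : M.transpose.conjTranspose =
        ((ρ α).transpose).map (algebraMap ℂ A) * Ubar *
          (((ρ α)⁻¹).transpose).map (algebraMap ℂ A) := by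
      have e1 : M.transpose.conjTranspose = M.conjTranspose.transpose := by
        ext i j
        simp [Matrix.conjTranspose_apply, Matrix.transpose_apply]
      have e2 : M.conjTranspose = ρ'A * (U α).conjTranspose * ρA := by
        rw [hMdef, Matrix.conjTranspose_mul, Matrix.conjTranspose_mul]
        rw [hρA, hρ'A, conjTranspose_map_alg, conjTranspose_map_alg,
          (hρpos α).1, hρ'herm]
        rw [Matrix.mul_assoc]
      rw [e1, e2]
      rw [transpose_central_right (ρ'A * (U α).conjTranspose) (ρ α)]
      rw [hρ'A, transpose_central_left ((ρ α)⁻¹) ((U α).conjTranspose)]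
      rw [hUHT, Matrix.mul_assoc]
    set N : Matrix (Fin (d α)) (Fin (d α)) A :=
      ((ρ α).transpose).map (algebraMap ℂ A) * Ubar *
        (((ρ α)⁻¹).transpose).map (algebraMap ℂ A) with hNdef
    have hNU : N * (U α).transpose = 1 := by
      have := congrArg Matrix.conjTranspose hub1
      rw [Matrix.conjTranspose_mul, hUbarH, hMTH, Matrix.conjTranspose_one] at this
      exact this
    have hUN : (U α).transpose * N = 1 := by
      have := congrArg Matrix.conjTranspose hub2
      rw [Matrix.conjTranspose_mul, hUbarH, hMTH, Matrix.conjTranspose_one] at this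
      exact this
    -- the fundamental relation  Ubar * C_A * Uᵀ = C_A
    have hL8 := conj_relation Δ h hinv_right (U α) (hcorep α)
      (delta_star Δ (U α) (hunitary α).1 (hunitary α).2 (hcorep α)) C hC ⟨0, hd α⟩
    -- from it:  Ubar * K_A = K_A * Ubar  with  K := C * ρᵀ
    set CA : Matrix (Fin (d α)) (Fin (d α)) A := C.map (algebraMap ℂ A) with hCA
    have step1 : Ubar * CA = CA * N := by
      calc Ubar * CA = Ubar * CA * ((U α).transpose * N) := by rw [hUN, mul_one]
        _ = (Ubar * CA * (U α).transpose) * N := by rw [← mul_assoc]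
        _ = CA * N := by rw [hL8]
    set K : Matrix (Fin (d α)) (Fin (d α)) ℂ := C * (ρ α).transpose with hK
    have hKA : K.map (algebraMap ℂ A) = CA * ((ρ α).transpose).map (algebraMap ℂ A) := by
      rw [hK, map_alg_mul', hCA]
    have step2 : Ubar * K.map (algebraMap ℂ A) = K.map (algebraMap ℂ A) * Ubar := by
      have tr1 : (((ρ α)⁻¹).transpose).map (algebraMap ℂ A) *
          ((ρ α).transpose).map (algebraMap ℂ A) = (1 : Matrix (Fin (d α)) (Fin (d α)) A) := by
        rw [← map_alg_mul', ← Matrix.transpose_mul, hρρ', Matrix.transpose_one, map_alg_one']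
      calc Ubar * K.map (algebraMap ℂ A)
          = (Ubar * CA) * ((ρ α).transpose).map (algebraMap ℂ A) := by
            rw [hKA, mul_assoc]
        _ = CA * N * ((ρ α).transpose).map (algebraMap ℂ A) := by rw [step1]
        _ = CA * (((ρ α).transpose).map (algebraMap ℂ A) * Ubar) *
              ((((ρ α)⁻¹).transpose).map (algebraMap ℂ A) *
                ((ρ α).transpose).map (algebraMap ℂ A)) := by
            rw [hNdef]
            simp only [mul_assoc]
        _ = K.map (algebraMap ℂ A) * Ubar := by
            rw [tr1, mul_one, hKA]
            simp only [mul_assoc]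
    -- convert to a commutation with U itself
    set L : Matrix (Fin (d α)) (Fin (d α)) ℂ := K.map star with hL
    have hKAH : (K.map (algebraMap ℂ A)).conjTranspose =
        (K.conjTranspose).map (algebraMap ℂ A) := conjTranspose_map_alg K
    have step3 : (K.conjTranspose).map (algebraMap ℂ A) * (U α).transpose =
        (U α).transpose * (K.conjTranspose).map (algebraMap ℂ A) := by
      have e1 := congrArg Matrix.conjTranspose step2
      rw [Matrix.conjTranspose_mul, Matrix.conjTranspose_mul, hKAH, hUbarH] at e1
      exact e1
    have step4 : U α * L.map (algebraMap ℂ A) = L.map (algebraMap ℂ A) * U α := by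
      have e1 := congrArg Matrix.transpose step3
      rw [transpose_central_left (K.conjTranspose) ((U α).transpose),
        transpose_central_right ((U α).transpose) (K.conjTranspose),
        Matrix.transpose_transpose] at e1
      have e2 : K.conjTranspose.transpose = L := by
        ext i j
        simp [hL, Matrix.conjTranspose_apply, Matrix.map_apply]
      rw [e2] at e1
      exact e1
    obtain ⟨μ₀, hμ₀⟩ := hirred α L step4.symm
    -- hence  C = μ • (ρ⁻¹)ᵀ
    have hKs : K = star μ₀ • (1 : Matrix (Fin (d α)) (Fin (d α)) ℂ) := by
      ext i j
      have e1 : K i j = star (L i j) := by simp [hL, Matrix.map_apply]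
      rw [e1, hμ₀]
      simp only [Matrix.smul_apply, Matrix.one_apply, smul_eq_mul, mul_ite, mul_one, mul_zero]
      by_cases hij : i = j <;> simp [hij]
    set μ : ℂ := star μ₀ with hμ
    have hCval : C = μ • ((ρ α)⁻¹).transpose := by
      have tr2 : (ρ α).transpose * ((ρ α)⁻¹).transpose = 1 := by
        rw [← Matrix.transpose_mul, hρ'ρ, Matrix.transpose_one]
      calc C = C * ((ρ α).transpose * ((ρ α)⁻¹).transpose) := by rw [tr2, mul_one]
        _ = (C * (ρ α).transpose) * ((ρ α)⁻¹).transpose := by rw [mul_assoc]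
        _ = (μ • (1 : Matrix (Fin (d α)) (Fin (d α)) ℂ)) * ((ρ α)⁻¹).transpose := by
            rw [← hK, hKs, hμ]
        _ = μ • ((ρ α)⁻¹).transpose := by rw [smul_mul_assoc, one_mul]
    -- normalisation: the diagonal sums to 1
    have htr : ∑ i, C i i = 1 := by
      have e1 : ((U α).conjTranspose * U α) ⟨0, hd α⟩ ⟨0, hd α⟩ = 1 := by
        rw [(hunitary α).2, Matrix.one_apply_eq]
      rw [Matrix.mul_apply] at e1
      have e2 := congrArg h e1
      rw [map_sum, hone] at e2
      calc ∑ i, C i i = ∑ i, h ((U α).conjTranspose ⟨0, hd α⟩ i * U α i ⟨0, hd α⟩) := by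
            refine Finset.sum_congr rfl fun i _ => ?_
            rw [Matrix.conjTranspose_apply, hC i ⟨0, hd α⟩ i ⟨0, hd α⟩, if_pos rfl]
        _ = 1 := e2
    have hμtrace : μ * (ρ α).trace = 1 := by
      have e1 : ∑ i, C i i = μ * ((ρ α)⁻¹).trace := by
        rw [hCval]
        simp only [Matrix.smul_apply, Matrix.transpose_apply, smul_eq_mul]
        rw [← Finset.mul_sum]
        rfl
      rw [htr, ← hρtrace α] at e1
      exact e1.symm
    have htrne : (ρ α).trace ≠ 0 := by
      intro h0
      rw [h0, mul_zero] at hμtrace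
      exact zero_ne_one hμtrace
    -- conclusion
    rw [hC i₀ k₀ j₀ l₀]
    have hCij : C i₀ j₀ = μ * (ρ α)⁻¹ j₀ i₀ := by
      rw [hCval]
      simp [Matrix.smul_apply, Matrix.transpose_apply]
    by_cases hkl : k₀ = l₀
    · rw [if_pos hkl, if_pos hkl, hCij, one_mul]
      rw [eq_div_iff htrne]
      linear_combination ((ρ α)⁻¹ j₀ i₀) * hμtrace
    · rw [if_neg hkl, if_neg hkl, zero_mul, zero_div]
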